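/- The even continued fraction representation of a nonnegative rational q/p (with gcd(p,q)=1 and p+q odd) is unique: if two even continued fractions [c₁±, …, c_k] and [d₁±, …, d_m] represent the same rational number, then k = m, cᵢ = dᵢ for all i, and the corresponding signs agree. -/

import Mathlib

/-- The value of the even continued fraction `c ± 1/(d₁ ± 1/( ⋯ ))`, where the
tail is the list of pairs (sign, term); `true` stands for `+`. -/
def ecfVal : ℤ → List (Bool × ℤ) → ℚ
  | c, [] => (c : ℚ)
  | c, (ε, d) :: t => (c : ℚ) + (if ε then 1 else -1) / ecfVal d t

lemma ecf_tail_gt_one (d : ℤ) (t : List (Bool × ℤ)) (hd : 0 < d) (hde : Even d)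
    (ht : ∀ x ∈ t, Even x.2 ∧ 0 < x.2) : 1 < ecfVal d t := by
  induction t generalizing d with
  | nil =>
    simp only [ecfVal]
    have : 2 ≤ d := by obtain ⟨k, hk⟩ := hde; omega
    exact_mod_cast by omega
  | cons hd' s ih =>
    obtain ⟨ε, e⟩ := hd'
    have he := ht (ε, e) List.mem_cons_self
    have hv : 1 < ecfVal e s := ih e he.2 he.1 (fun x hx => ht x (List.mem_cons_of_mem _ hx))
    have hv0 : (0:ℚ) < ecfVal e s := lt_trans one_pos hv
    have h2 : (2:ℚ) ≤ (d:ℚ) := by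
      have : 2 ≤ d := by obtain ⟨k, hk⟩ := hde; omega
      exact_mod_cast this
    have hb : |(if ε then (1:ℚ) else -1) / ecfVal e s| < 1 := by
      rw [abs_div]
      have : |(if ε then (1:ℚ) else -1)| = 1 := by cases ε <;> simp
      rw [this, abs_of_pos hv0, div_lt_one hv0]
      exact hv
    have := abs_lt.mp hb
    simp only [ecfVal]
    linarith [this.1]

lemma ecf_sig_bound (ε : Bool) (v : ℚ) (hv : 1 < v) :
    |(if ε then (1:ℚ) else -1) / v| < 1 ∧ (if ε then (1:ℚ) else -1) / v ≠ 0 := by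
  have h0 : 0 < v := lt_trans one_pos hv
  constructor
  · rw [abs_div]
    have : |(if ε then (1:ℚ) else -1)| = 1 := by cases ε <;> simp
    rw [this, abs_of_pos h0, div_lt_one h0]
    exact hv
  · cases ε <;> simp <;> positivity

theorem even_continued_fraction_unique (c c' : ℤ) (t t' : List (Bool × ℤ))
    (hc : Even c) (hc0 : 0 ≤ c) (ht : ∀ x ∈ t, Even x.2 ∧ 0 < x.2)
    (hc' : Even c') (hc0' : 0 ≤ c') (ht' : ∀ x ∈ t', Even x.2 ∧ 0 < x.2)
    (heq : ecfVal c t = ecfVal c' t') : c = c' ∧ t = t' := by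
  induction t generalizing c c' t' with
  | nil =>
    cases t' with
    | nil =>
      simp only [ecfVal] at heq
      exact ⟨by exact_mod_cast heq, rfl⟩
    | cons hd' s' =>
      exfalso
      obtain ⟨ε', e'⟩ := hd'
      have he' := ht' (ε', e') List.mem_cons_self
      have hv' : 1 < ecfVal e' s' :=
        ecf_tail_gt_one e' s' he'.2 he'.1 (fun x hx => ht' x (List.mem_cons_of_mem _ hx))
      obtain ⟨hb, hne⟩ := ecf_sig_bound ε' _ hv'
      simp only [ecfVal] at heq
      have h1 : |((c - c' : ℤ) : ℚ)| < 1 := by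
        push_cast
        have : (c:ℚ) - c' = (if ε' then (1:ℚ) else -1) / ecfVal e' s' := by linarith
        rw [this]; exact hb
      have h2 : c - c' = 0 := by
        rw [← Int.cast_abs] at h1
        have h3 := abs_lt.mp (by exact_mod_cast h1 : |c - c'| < (1:ℤ))
        omega
      have : (c:ℚ) = c' := by exact_mod_cast (by omega : c = c')
      rw [this] at heq
      exact hne (by linarith)
  | cons hd s ih =>
    obtain ⟨ε, e⟩ := hd
    have he := ht (ε, e) List.mem_cons_self
    have hv : 1 < ecfVal e s :=
      ecf_tail_gt_one e s he.2 he.1 (fun x hx => ht x (List.mem_cons_of_mem _ hx))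
    obtain ⟨hb, hne⟩ := ecf_sig_bound ε _ hv
    cases t' with
    | nil =>
      exfalso
      simp only [ecfVal] at heq
      have h1 : |((c - c' : ℤ) : ℚ)| < 1 := by
        push_cast
        have : (c:ℚ) - c' = -((if ε then (1:ℚ) else -1) / ecfVal e s) := by linarith
        rw [this, abs_neg]; exact hb
      have h2 : c - c' = 0 := by
        rw [← Int.cast_abs] at h1
        have h3 := abs_lt.mp (by exact_mod_cast h1 : |c - c'| < (1:ℤ))
        omega
      have : (c:ℚ) = c' := by exact_mod_cast (by omega : c = c')
      rw [this] at heq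
      exact hne (by linarith)
    | cons hd' s' =>
      obtain ⟨ε', e'⟩ := hd'
      have he' := ht' (ε', e') List.mem_cons_self
      have hv' : 1 < ecfVal e' s' :=
        ecf_tail_gt_one e' s' he'.2 he'.1 (fun x hx => ht' x (List.mem_cons_of_mem _ hx))
      obtain ⟨hb', hne'⟩ := ecf_sig_bound ε' _ hv'
      simp only [ecfVal] at heq
      have hcc : c = c' := by
        have h1 : |((c - c' : ℤ) : ℚ)| < 2 := by
          push_cast
          have habs := abs_lt.mp hb
          have habs' := abs_lt.mp hb'
          rw [abs_lt]
          constructor <;> nlinarith [habs.1, habs.2, habs'.1, habs'.2]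
        rw [← Int.cast_abs] at h1
        have h3 := abs_lt.mp (by exact_mod_cast h1 : |c - c'| < (2:ℤ))
        obtain ⟨k, hk⟩ := hc
        obtain ⟨k', hk'⟩ := hc'
        omega
      have hcq : (c:ℚ) = c' := by exact_mod_cast hcc
      rw [hcq] at heq
      have hfrac : (if ε then (1:ℚ) else -1) / ecfVal e s
          = (if ε' then (1:ℚ) else -1) / ecfVal e' s' := by linarith
      have hv0 : (0:ℚ) < ecfVal e s := lt_trans one_pos hv
      have hv0' : (0:ℚ) < ecfVal e' s' := lt_trans one_pos hv'
      have hee : ε = ε' := by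
        cases ε <;> cases ε'
        · rfl
        · exfalso
          norm_num at hfrac
          have l1 : (-1:ℚ) / ecfVal e s < 0 := div_neg_of_neg_of_pos (by norm_num) hv0
          have l2 : (0:ℚ) < (ecfVal e' s')⁻¹ := inv_pos.mpr hv0'
          linarith
        · exfalso
          norm_num at hfrac
          have l1 : (0:ℚ) < (ecfVal e s)⁻¹ := inv_pos.mpr hv0
          have l2 : (-1:ℚ) / ecfVal e' s' < 0 := div_neg_of_neg_of_pos (by norm_num) hv0'
          linarith
        · rfl
      subst hee
      have key : ∀ σ v w : ℚ, σ ≠ 0 → v ≠ 0 → w ≠ 0 → σ / v = σ / w → v = w := by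
        intro σ v w hσ hv hw h
        rw [div_eq_div_iff hv hw] at h
        exact (mul_left_cancel₀ hσ h).symm
      have hvv : ecfVal e s = ecfVal e' s' :=
        key _ _ _ (by cases ε <;> norm_num) (ne_of_gt hv0) (ne_of_gt hv0') hfrac
      have hrest := ih e e' s' he.1 (le_of_lt he.2)
        (fun x hx => ht x (List.mem_cons_of_mem _ hx)) he'.1 (le_of_lt he'.2)
        (fun x hx => ht' x (List.mem_cons_of_mem _ hx)) hvv
      exact ⟨hcc, by rw [hrest.1, hrest.2]⟩
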